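/- There exists a solvable MPP instance (G, R, x_I, x_G) such that no solution simultaneously attains the minimum total arrival time and the minimum maximum distance. -/

import Mathlib

/-!
Formalization of multi-robot path planning on graphs (MPP).

An MPP instance consists of a connected simple graph `G` on a vertex type `V`,
a finite set of robots (an index type `R`), and injective start/goal
configurations `xI xG : R → V`.  A scheduled path is a map `ℕ → V`.
-/

namespace MPPFormal

variable {V R : Type}

/-- The arrival time of a path `p` with goal `g`: the smallest time `t`
with `p t = g`. -/
noncomputable def arrivalTime (g : V) (p : ℕ → V) : ℕ := sInf {t | p t = g}

/-- A feasible scheduled path from `s` to `g` in the graph `G`: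
it starts at `s`, reaches `g` at some time, stays at `g` forever after the
first time it reaches `g`, and at every time step it either traverses an
edge of `G` or stays put. -/
def FeasiblePath (G : SimpleGraph V) (s g : V) (p : ℕ → V) : Prop :=
  p 0 = s ∧ (∃ t, p t = g) ∧ (∀ t, arrivalTime g p ≤ t → p t = g) ∧
    ∀ t, G.Adj (p t) (p (t + 1)) ∨ p t = p (t + 1)

/-- Two scheduled paths collide if they meet at the same vertex at the same
time, or if they swap along an edge head-on. -/
def Collide (p q : ℕ → V) : Prop :=
  (∃ t, p t = q t) ∨ ∃ t, p t = q (t + 1) ∧ p (t + 1) = q t ∧ p t ≠ p (t + 1)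

/-- The length of a scheduled path: the number of time steps at which it
actually moves. -/
noncomputable def pathLen (p : ℕ → V) : ℕ := Set.ncard {t | p t ≠ p (t + 1)}

/-- A solution to the MPP instance `(G, R, xI, xG)`: a family of pairwise
non-colliding feasible paths, one per robot. -/
def IsSolution (G : SimpleGraph V) (xI xG : R → V) (p : R → ℕ → V) : Prop :=
  (∀ i, FeasiblePath G (xI i) (xG i) (p i)) ∧
    Pairwise fun i j => ¬ Collide (p i) (p j)

/-- `(G, xI, xG)` together with the robot index type `R` forms an MPP
instance: the graph is connected and the start and goal configurations are
injective. -/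
def IsMPPInstance (G : SimpleGraph V) (xI xG : R → V) : Prop :=
  G.Connected ∧ Function.Injective xI ∧ Function.Injective xG

variable [Fintype R]

/-- Total arrival time of a solution. -/
noncomputable def totalTime (xG : R → V) (p : R → ℕ → V) : ℕ :=
  ∑ i, arrivalTime (xG i) (p i)

/-- Makespan (last arrival time) of a solution. -/
noncomputable def makespan (xG : R → V) (p : R → ℕ → V) : ℕ :=
  Finset.univ.sup fun i => arrivalTime (xG i) (p i)

/-- Total distance traveled in a solution. -/
noncomputable def totalDist (p : R → ℕ → V) : ℕ := ∑ i, pathLen (p i)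

/-- Maximum single-robot distance of a solution. -/
noncomputable def maxDist (p : R → ℕ → V) : ℕ :=
  Finset.univ.sup fun i => pathLen (p i)

/-- Minimum total arrival time over all solutions. -/
noncomputable def minTotalTime (G : SimpleGraph V) (xI xG : R → V) : ℕ :=
  sInf {c | ∃ p, IsSolution G xI xG p ∧ totalTime xG p = c}

/-- Minimum makespan over all solutions. -/
noncomputable def minMakespan (G : SimpleGraph V) (xI xG : R → V) : ℕ :=
  sInf {c | ∃ p, IsSolution G xI xG p ∧ makespan xG p = c}

/-- Minimum total distance over all solutions. -/
noncomputable def minTotalDist (G : SimpleGraph V) (xI xG : R → V) : ℕ :=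
  sInf {c | ∃ p, IsSolution G xI xG p ∧ totalDist p = c}

/-- Minimum maximum distance over all solutions. -/
noncomputable def minMaxDist (G : SimpleGraph V) (xI xG : R → V) : ℕ :=
  sInf {c | ∃ p, IsSolution G xI xG p ∧ maxDist p = c}

end MPPFormal

namespace MPPFormal

/-! ### The concrete instance -/

def adjL : List (Fin 7 × Fin 7) :=
  [(0,1),(1,2),(2,3),(4,2),(1,5),(1,6),(6,2)]

def GG : SimpleGraph (Fin 7) where
  Adj x y := (x,y) ∈ adjL ∨ (y,x) ∈ adjL
  symm := ⟨by intro x y h; exact h.symm⟩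
  loopless := ⟨by intro x h; revert h; revert x; decide⟩

instance : DecidableRel GG.Adj :=
  fun x y => inferInstanceAs (Decidable ((x,y) ∈ adjL ∨ (y,x) ∈ adjL))

lemma GG_conn : GG.Connected := by
  rw [SimpleGraph.connected_iff]
  have h : ∀ w : Fin 7, GG.Reachable 1 w := by
    intro w
    have r2 : GG.Reachable 1 2 := (by decide : GG.Adj 1 2).reachable
    fin_cases w
    · exact (by decide : GG.Adj 1 0).reachable
    · exact SimpleGraph.Reachable.refl _
    · exact r2
    · exact r2.trans (by decide : GG.Adj 2 3).reachable
    · exact r2.trans (by decide : GG.Adj 2 4).reachable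
    · exact (by decide : GG.Adj 1 5).reachable
    · exact (by decide : GG.Adj 1 6).reachable
  exact ⟨fun u v => (h u).symm.trans (h v), ⟨0⟩⟩

/-! ### Generic facts about feasible paths -/

lemma arr_mem {g : Fin 7} {p : ℕ → Fin 7} (h : ∃ t, p t = g) :
    p (arrivalTime g p) = g := Nat.sInf_mem h

lemma arr_lt {g : Fin 7} {p : ℕ → Fin 7} {t : ℕ} (h : t < arrivalTime g p) :
    p t ≠ g := Nat.notMem_of_lt_sInf h

/-- The number of moves before time `t`. -/
def mov (p : ℕ → Fin 7) (t : ℕ) : ℕ :=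
  ((Finset.range t).filter fun s => p s ≠ p (s+1)).card

lemma mov_stay {p : ℕ → Fin 7} {t : ℕ} (h : p t = p (t+1)) :
    mov p (t+1) = mov p t := by
  unfold mov
  rw [Finset.range_add_one, Finset.filter_insert, if_neg (by simpa using h)]

lemma mov_move {p : ℕ → Fin 7} {t : ℕ} (h : p t ≠ p (t+1)) :
    mov p (t+1) = mov p t + 1 := by
  unfold mov
  rw [Finset.range_add_one, Finset.filter_insert, if_pos h,
    Finset.card_insert_of_notMem (by simp)]

lemma moveSet_subset {g : Fin 7} {p : ℕ → Fin 7}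
    (hg : ∀ t, arrivalTime g p ≤ t → p t = g) :
    {t | p t ≠ p (t+1)} ⊆ ↑(Finset.range (arrivalTime g p)) := by
  intro t ht
  simp only [Finset.coe_range, Set.mem_Iio]
  by_contra h
  push_neg at h
  exact ht (by rw [hg t h, hg (t+1) (le_trans h (Nat.le_succ t))])

lemma moveSet_finite {g : Fin 7} {p : ℕ → Fin 7}
    (hg : ∀ t, arrivalTime g p ≤ t → p t = g) :
    {t | p t ≠ p (t+1)}.Finite :=
  Set.Finite.subset (Finset.finite_toSet _) (moveSet_subset hg)

lemma len_le_arr {g : Fin 7} {p : ℕ → Fin 7}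
    (hg : ∀ t, arrivalTime g p ≤ t → p t = g) :
    pathLen p ≤ arrivalTime g p := by
  have := Set.ncard_le_ncard (moveSet_subset hg) (Finset.finite_toSet _)
  rwa [Set.ncard_coe_finset, Finset.card_range] at this

lemma mov_le_len {g : Fin 7} {p : ℕ → Fin 7}
    (hg : ∀ t, arrivalTime g p ≤ t → p t = g) (T : ℕ) :
    mov p T ≤ pathLen p := by
  have hsub : ↑((Finset.range T).filter fun s => p s ≠ p (s+1))
      ⊆ {t | p t ≠ p (t+1)} := by
    intro t ht
    simp only [Finset.coe_filter, Set.mem_setOf_eq] at ht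
    exact ht.2
  have := Set.ncard_le_ncard hsub (moveSet_finite hg)
  rwa [Set.ncard_coe_finset] at this

/-! ### Distance lower bounds via an invariant -/

lemma adj0 : ∀ y : Fin 7, GG.Adj 0 y → y = 1 := by decide
lemma adj1 : ∀ y : Fin 7, GG.Adj 1 y → y = 0 ∨ y = 2 ∨ y = 5 ∨ y = 6 := by decide
lemma adj4 : ∀ y : Fin 7, GG.Adj 4 y → y = 2 := by decide
lemma adj2 : ∀ y : Fin 7, GG.Adj 2 y → y = 1 ∨ y = 3 ∨ y = 4 ∨ y = 6 := by decide

lemma invA {p : ℕ → Fin 7} (h0 : p 0 = 0)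
    (hs : ∀ t, GG.Adj (p t) (p (t+1)) ∨ p t = p (t+1)) :
    ∀ t, p t = 0 ∨ (p t = 1 ∧ 1 ≤ mov p t)
      ∨ ((p t = 0 ∨ p t = 1 ∨ p t = 2 ∨ p t = 5 ∨ p t = 6) ∧ 2 ≤ mov p t)
      ∨ 3 ≤ mov p t := by
  intro t
  induction t with
  | zero => exact Or.inl h0
  | succ n ih =>
    rcases hs n with hadj | heq
    · have hm : mov p (n+1) = mov p n + 1 := mov_move (GG.ne_of_adj hadj)
      rcases ih with h | ⟨h, hc⟩ | ⟨h, hc⟩ | hc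
      · have h1 : p (n+1) = 1 := adj0 _ (h ▸ hadj)
        exact Or.inr (Or.inl ⟨h1, by omega⟩)
      · have h1 := adj1 _ (h ▸ hadj)
        exact Or.inr (Or.inr (Or.inl ⟨by tauto, by omega⟩))
      · exact Or.inr (Or.inr (Or.inr (by omega)))
      · exact Or.inr (Or.inr (Or.inr (by omega)))
    · have hm : mov p (n+1) = mov p n := mov_stay heq
      rw [← heq, hm]
      exact ih

lemma invB {p : ℕ → Fin 7} (h0 : p 0 = 4)
    (hs : ∀ t, GG.Adj (p t) (p (t+1)) ∨ p t = p (t+1)) :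
    ∀ t, p t = 4 ∨ (p t = 2 ∧ 1 ≤ mov p t)
      ∨ ((p t = 1 ∨ p t = 2 ∨ p t = 3 ∨ p t = 4 ∨ p t = 6) ∧ 2 ≤ mov p t)
      ∨ 3 ≤ mov p t := by
  intro t
  induction t with
  | zero => exact Or.inl h0
  | succ n ih =>
    rcases hs n with hadj | heq
    · have hm : mov p (n+1) = mov p n + 1 := mov_move (GG.ne_of_adj hadj)
      rcases ih with h | ⟨h, hc⟩ | ⟨h, hc⟩ | hc
      · have h1 : p (n+1) = 2 := adj4 _ (h ▸ hadj)
        exact Or.inr (Or.inl ⟨h1, by omega⟩)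
      · have h1 := adj2 _ (h ▸ hadj)
        exact Or.inr (Or.inr (Or.inl ⟨by tauto, by omega⟩))
      · exact Or.inr (Or.inr (Or.inr (by omega)))
      · exact Or.inr (Or.inr (Or.inr (by omega)))
    · have hm : mov p (n+1) = mov p n := mov_stay heq
      rw [← heq, hm]
      exact ih

lemma lenA_ge {p : ℕ → Fin 7} (hf : FeasiblePath GG 0 3 p) : 3 ≤ pathLen p := by
  obtain ⟨h0, hex, hg, hs⟩ := hf
  obtain ⟨T, hT⟩ := hex
  have h3 : 3 ≤ mov p T := by
    rcases invA h0 hs T with h | ⟨h, _⟩ | ⟨h, _⟩ | h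
    · exact absurd (hT ▸ h) (by decide)
    · exact absurd (hT ▸ h) (by decide)
    · rw [hT] at h; rcases h with h|h|h|h|h <;> exact absurd h (by decide)
    · exact h
  exact le_trans h3 (mov_le_len hg T)

lemma lenB_ge {p : ℕ → Fin 7} (hf : FeasiblePath GG 4 5 p) : 3 ≤ pathLen p := by
  obtain ⟨h0, hex, hg, hs⟩ := hf
  obtain ⟨T, hT⟩ := hex
  have h3 : 3 ≤ mov p T := by
    rcases invB h0 hs T with h | ⟨h, _⟩ | ⟨h, _⟩ | h
    · exact absurd (hT ▸ h) (by decide)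
    · exact absurd (hT ▸ h) (by decide)
    · rw [hT] at h; rcases h with h|h|h|h|h <;> exact absurd h (by decide)
    · exact h
  exact le_trans h3 (mov_le_len hg T)

lemma arrA_ge {p : ℕ → Fin 7} (hf : FeasiblePath GG 0 3 p) :
    3 ≤ arrivalTime 3 p := le_trans (lenA_ge hf) (len_le_arr hf.2.2.1)

lemma arrB_ge {p : ℕ → Fin 7} (hf : FeasiblePath GG 4 5 p) :
    3 ≤ arrivalTime 5 p := le_trans (lenB_ge hf) (len_le_arr hf.2.2.1)

/-! ### Step neighborhood lemmas -/

lemma st_to3 : ∀ x : Fin 7, (GG.Adj x 3 ∨ x = 3) → x = 2 ∨ x = 3 := by decide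
lemma st_to5 : ∀ x : Fin 7, (GG.Adj x 5 ∨ x = 5) → x = 1 ∨ x = 5 := by decide
lemma st_from0 : ∀ y : Fin 7, (GG.Adj 0 y ∨ (0:Fin 7) = y) → y = 0 ∨ y = 1 := by decide
lemma st_from4 : ∀ y : Fin 7, (GG.Adj 4 y ∨ (4:Fin 7) = y) → y = 4 ∨ y = 2 := by decide
lemma st_to2 : ∀ x : Fin 7, (GG.Adj x 2 ∨ x = 2) →
    x = 1 ∨ x = 2 ∨ x = 3 ∨ x = 4 ∨ x = 6 := by decide
lemma st_to1 : ∀ x : Fin 7, (GG.Adj x 1 ∨ x = 1) →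
    x = 0 ∨ x = 1 ∨ x = 2 ∨ x = 5 ∨ x = 6 := by decide

/-! ### Forced schedules -/

/-- A robot from 0 to 3 arriving at time 3 is forced onto `0,1,2,3`. -/
lemma forceA3 {p : ℕ → Fin 7} (hf : FeasiblePath GG 0 3 p)
    (h3 : arrivalTime 3 p = 3) : p 1 = 1 ∧ p 2 = 2 := by
  obtain ⟨h0, hex, hg, hs⟩ := hf
  have hp3 : p 3 = 3 := by have := arr_mem hex; rwa [h3] at this
  have hp2ne : p 2 ≠ 3 := arr_lt (by omega)
  have hp2 : p 2 = 2 := by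
    rcases st_to3 _ (hp3 ▸ hs 2) with h | h
    · exact h
    · exact absurd h hp2ne
  have hp1 : p 1 = 1 := by
    rcases st_from0 _ (h0 ▸ hs 0) with h | h
    · rcases st_to2 _ (hp2 ▸ hs 1) with h' | h' | h' | h' | h' <;>
        rw [h] at h' <;> first | (exact absurd h' (by decide)) | skip
    · exact h
  exact ⟨hp1, hp2⟩

/-- A robot from 4 to 5 arriving at time 3 is forced onto `4,2,1,5`. -/
lemma forceB3 {p : ℕ → Fin 7} (hf : FeasiblePath GG 4 5 p)
    (h3 : arrivalTime 5 p = 3) : p 1 = 2 ∧ p 2 = 1 := by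
  obtain ⟨h0, hex, hg, hs⟩ := hf
  have hp3 : p 3 = 5 := by have := arr_mem hex; rwa [h3] at this
  have hp2ne : p 2 ≠ 5 := arr_lt (by omega)
  have hp2 : p 2 = 1 := by
    rcases st_to5 _ (hp3 ▸ hs 2) with h | h
    · exact h
    · exact absurd h hp2ne
  have hp1 : p 1 = 2 := by
    rcases st_from4 _ (h0 ▸ hs 0) with h | h
    · rcases st_to1 _ (hp2 ▸ hs 1) with h' | h' | h' | h' | h' <;>
        rw [h] at h' <;> first | (exact absurd h' (by decide)) | skip
    · exact h
  exact ⟨hp1, hp2⟩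

/-! ### Concrete paths -/

/-- Robot 0's direct route `0,1,2,3`. -/
def pA : ℕ → Fin 7
  | 0 => 0 | 1 => 1 | 2 => 2 | _ + 3 => 3

/-- Robot 1's detour route `4,2,6,1,5`. -/
def pBd : ℕ → Fin 7
  | 0 => 4 | 1 => 2 | 2 => 6 | 3 => 1 | _ + 4 => 5

/-- Robot 1's waiting route `4,4,4,2,1,5`. -/
def pBw : ℕ → Fin 7
  | 0 => 4 | 1 => 4 | 2 => 4 | 3 => 2 | 4 => 1 | _ + 5 => 5

lemma arr_pA : arrivalTime 3 pA = 3 := by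
  apply le_antisymm
  · exact Nat.sInf_le (by simp [pA])
  · apply le_csInf ⟨3, by simp [pA]⟩
    intro b hb
    by_contra h
    push_neg at h
    interval_cases b <;> exact absurd hb (by decide)

lemma arr_pBd : arrivalTime 5 pBd = 4 := by
  apply le_antisymm
  · exact Nat.sInf_le (by simp [pBd])
  · apply le_csInf ⟨4, by simp [pBd]⟩
    intro b hb
    by_contra h
    push_neg at h
    interval_cases b <;> exact absurd hb (by decide)

lemma arr_pBw : arrivalTime 5 pBw = 5 := by
  apply le_antisymm
  · exact Nat.sInf_le (by simp [pBw])
  · apply le_csInf ⟨5, by simp [pBw]⟩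
    intro b hb
    by_contra h
    push_neg at h
    interval_cases b <;> exact absurd hb (by decide)

lemma feas_pA : FeasiblePath GG 0 3 pA := by
  refine ⟨rfl, ⟨3, rfl⟩, ?_, ?_⟩
  · intro t ht
    rw [arr_pA] at ht
    obtain ⟨s, rfl⟩ : ∃ s, t = s + 3 := ⟨t - 3, by omega⟩
    rfl
  · intro t
    rcases t with _ | _ | _ | t
    · exact Or.inl (by decide)
    · exact Or.inl (by decide)
    · exact Or.inl (by decide)
    · exact Or.inr rfl

lemma feas_pBd : FeasiblePath GG 4 5 pBd := by
  refine ⟨rfl, ⟨4, rfl⟩, ?_, ?_⟩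
  · intro t ht
    rw [arr_pBd] at ht
    obtain ⟨s, rfl⟩ : ∃ s, t = s + 4 := ⟨t - 4, by omega⟩
    rfl
  · intro t
    rcases t with _ | _ | _ | _ | t
    · exact Or.inl (by decide)
    · exact Or.inl (by decide)
    · exact Or.inl (by decide)
    · exact Or.inl (by decide)
    · exact Or.inr rfl

lemma feas_pBw : FeasiblePath GG 4 5 pBw := by
  refine ⟨rfl, ⟨5, rfl⟩, ?_, ?_⟩
  · intro t ht
    rw [arr_pBw] at ht
    obtain ⟨s, rfl⟩ : ∃ s, t = s + 5 := ⟨t - 5, by omega⟩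
    rfl
  · intro t
    rcases t with _ | _ | _ | _ | _ | t
    · exact Or.inr rfl
    · exact Or.inr rfl
    · exact Or.inl (by decide)
    · exact Or.inl (by decide)
    · exact Or.inl (by decide)
    · exact Or.inr rfl

lemma len_pA_le : pathLen pA ≤ 3 := by
  have hsub : {t | pA t ≠ pA (t+1)} ⊆ ↑({0, 1, 2} : Finset ℕ) := by
    intro t ht
    rcases t with _ | _ | _ | t
    · simp
    · simp
    · simp
    · exact absurd rfl ht
  have := Set.ncard_le_ncard hsub (Finset.finite_toSet _)
  rwa [Set.ncard_coe_finset] at this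

lemma len_pBw_le : pathLen pBw ≤ 3 := by
  have hsub : {t | pBw t ≠ pBw (t+1)} ⊆ ↑({2, 3, 4} : Finset ℕ) := by
    intro t ht
    rcases t with _ | _ | _ | _ | _ | t
    · exact absurd rfl ht
    · exact absurd rfl ht
    · simp
    · simp
    · simp
    · exact absurd rfl ht
  have := Set.ncard_le_ncard hsub (Finset.finite_toSet _)
  rwa [Set.ncard_coe_finset] at this

/-! ### Non-collision of the concrete solutions -/

lemma collide_symm {W : Type} {p q : ℕ → W} (h : Collide p q) : Collide q p := by
  rcases h with ⟨t, ht⟩ | ⟨t, h1, h2, h3⟩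
  · exact Or.inl ⟨t, ht.symm⟩
  · refine Or.inr ⟨t, h2.symm, h1.symm, fun hq => h3 ?_⟩
    rw [← h2, ← h1] at hq
    exact hq.symm

lemma pA_big : ∀ t, pA (t + 3) = 3 := fun t => rfl
lemma pBd_big : ∀ t, pBd (t + 4) = 5 := fun t => rfl
lemma pBw_big : ∀ t, pBw (t + 5) = 5 := fun t => rfl

lemma ncol_A_Bd : ¬ Collide pA pBd := by
  rintro (⟨t, ht⟩ | ⟨t, h1, h2, h3⟩)
  · rcases t with _ | _ | _ | _ | t
    · exact absurd ht (by decide)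
    · exact absurd ht (by decide)
    · exact absurd ht (by decide)
    · exact absurd ht (by decide)
    · rw [show t+1+1+1+1 = (t+1) + 3 by omega, pA_big,
        show t+1 + 3 = t + 4 by omega, pBd_big] at ht
      exact absurd ht (by decide)
  · rcases t with _ | _ | _ | _ | t
    · exact absurd h1 (by decide)
    · exact absurd h1 (by decide)
    · exact absurd h1 (by decide)
    · exact absurd h1 (by decide)
    · rw [show t+1+1+1+1 = (t+1) + 3 by omega, pA_big,
        show t+1+1+1+1+1 = (t+1) + 4 by omega, pBd_big] at h1
      exact absurd h1 (by decide)

lemma ncol_A_Bw : ¬ Collide pA pBw := by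
  rintro (⟨t, ht⟩ | ⟨t, h1, h2, h3⟩)
  · rcases t with _ | _ | _ | _ | _ | t
    · exact absurd ht (by decide)
    · exact absurd ht (by decide)
    · exact absurd ht (by decide)
    · exact absurd ht (by decide)
    · exact absurd ht (by decide)
    · rw [show t+1+1+1+1+1 = (t+2) + 3 by omega, pA_big,
        show t+2 + 3 = t + 5 by omega, pBw_big] at ht
      exact absurd ht (by decide)
  · rcases t with _ | _ | _ | _ | _ | t
    · exact absurd h1 (by decide)
    · exact absurd h1 (by decide)
    · exact absurd h2 (by decide)
    · exact absurd h1 (by decide)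
    · exact absurd h1 (by decide)
    · rw [show t+1+1+1+1+1 = (t+2) + 3 by omega, pA_big,
        show t+1+1+1+1+1+1 = (t+1) + 5 by omega, pBw_big] at h1
      exact absurd h1 (by decide)

/-! ### The instance and its two solutions -/

/-- Start configuration. -/
def xI0 : Fin 2 → Fin 7 := ![0, 4]
/-- Goal configuration. -/
def xG0 : Fin 2 → Fin 7 := ![3, 5]
/-- The minimum-total-time solution (robot 1 detours through vertex 6). -/
def sol1 : Fin 2 → ℕ → Fin 7 := ![pA, pBd]
/-- The minimum-max-distance solution (robot 1 waits two steps). -/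
def sol2 : Fin 2 → ℕ → Fin 7 := ![pA, pBw]

lemma feasQ {q : Fin 2 → ℕ → Fin 7} (hq : IsSolution GG xI0 xG0 q) :
    FeasiblePath GG 0 3 (q 0) ∧ FeasiblePath GG 4 5 (q 1) := by
  have h0 := hq.1 0
  have h1 := hq.1 1
  simp only [xI0, xG0, Matrix.cons_val_zero, Matrix.cons_val_one, Matrix.head_cons] at h0 h1
  exact ⟨h0, h1⟩

lemma totalTime_eq (q : Fin 2 → ℕ → Fin 7) :
    totalTime xG0 q = arrivalTime 3 (q 0) + arrivalTime 5 (q 1) := by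
  simp [totalTime, Fin.sum_univ_two, xG0]

lemma sol1_isSol : IsSolution GG xI0 xG0 sol1 := by
  constructor
  · intro i
    fin_cases i
    · simpa [sol1, xI0, xG0] using feas_pA
    · simpa [sol1, xI0, xG0] using feas_pBd
  · intro i j hij
    fin_cases i <;> fin_cases j
    · exact absurd rfl hij
    · simpa [sol1] using ncol_A_Bd
    · simpa [sol1] using fun h => ncol_A_Bd (collide_symm h)
    · exact absurd rfl hij

lemma sol2_isSol : IsSolution GG xI0 xG0 sol2 := by
  constructor
  · intro i
    fin_cases i
    · simpa [sol2, xI0, xG0] using feas_pA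
    · simpa [sol2, xI0, xG0] using feas_pBw
  · intro i j hij
    fin_cases i <;> fin_cases j
    · exact absurd rfl hij
    · simpa [sol2] using ncol_A_Bw
    · simpa [sol2] using fun h => ncol_A_Bw (collide_symm h)
    · exact absurd rfl hij

lemma sol1_total : totalTime xG0 sol1 = 7 := by
  rw [totalTime_eq]
  simp only [sol1, Matrix.cons_val_zero, Matrix.cons_val_one, Matrix.head_cons]
  rw [arr_pA, arr_pBd]

lemma sol2_maxDist : maxDist sol2 = 3 := by
  apply le_antisymm
  · apply Finset.sup_le
    intro i _
    fin_cases i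
    · simpa [sol2] using len_pA_le
    · simpa [sol2] using len_pBw_le
  · have h := Finset.le_sup (f := fun i => pathLen (sol2 i)) (Finset.mem_univ 0)
    refine le_trans ?_ h
    simpa [sol2] using lenA_ge feas_pA

/-! ### Lower bounds over all solutions -/

lemma total_lb {q : Fin 2 → ℕ → Fin 7} (hq : IsSolution GG xI0 xG0 q) :
    7 ≤ totalTime xG0 q := by
  obtain ⟨hfA, hfB⟩ := feasQ hq
  rw [totalTime_eq]
  have hA := arrA_ge hfA
  have hB := arrB_ge hfB
  rcases Nat.lt_or_ge (arrivalTime 3 (q 0) + arrivalTime 5 (q 1)) 7 with h | h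
  · exfalso
    have hA3 : arrivalTime 3 (q 0) = 3 := by omega
    have hB3 : arrivalTime 5 (q 1) = 3 := by omega
    obtain ⟨ha1, ha2⟩ := forceA3 hfA hA3
    obtain ⟨hb1, hb2⟩ := forceB3 hfB hB3
    exact hq.2 (show (0 : Fin 2) ≠ 1 by decide)
      (Or.inr ⟨1, by rw [ha1, hb2], by rw [ha2, hb1], by rw [ha1, ha2]; decide⟩)
  · exact h

lemma maxDist_lb {q : Fin 2 → ℕ → Fin 7} (hq : IsSolution GG xI0 xG0 q) :
    3 ≤ maxDist q := by
  have h := Finset.le_sup (f := fun i => pathLen (q i)) (Finset.mem_univ 0)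
  exact le_trans (lenA_ge (feasQ hq).1) h

lemma minTotal_eq : minTotalTime GG xI0 xG0 = 7 := by
  have hmem : (7 : ℕ) ∈ {c | ∃ p, IsSolution GG xI0 xG0 p ∧ totalTime xG0 p = c} :=
    ⟨sol1, sol1_isSol, sol1_total⟩
  refine le_antisymm (Nat.sInf_le hmem) (le_csInf ⟨7, hmem⟩ ?_)
  rintro b ⟨p, hp, rfl⟩
  exact total_lb hp

lemma minMax_eq : minMaxDist GG xI0 xG0 = 3 := by
  have hmem : (3 : ℕ) ∈ {c | ∃ p, IsSolution GG xI0 xG0 p ∧ maxDist p = c} :=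
    ⟨sol2, sol2_isSol, sol2_maxDist⟩
  refine le_antisymm (Nat.sInf_le hmem) (le_csInf ⟨3, hmem⟩ ?_)
  rintro b ⟨p, hp, rfl⟩
  exact maxDist_lb hp

/-! ### No solution attains both optima -/

lemma four_moves {g : Fin 7} {p : ℕ → Fin 7}
    (hg : ∀ t, arrivalTime g p ≤ t → p t = g)
    (h0 : p 0 ≠ p 1) (h1 : p 1 ≠ p 2) (h2 : p 2 ≠ p 3) (h3 : p 3 ≠ p 4) :
    4 ≤ pathLen p := by
  have e : mov p 4 = 4 := by
    have m0 : mov p 0 = 0 := by simp [mov]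
    rw [show (4:ℕ) = 3 + 1 by rfl, mov_move h3, show (3:ℕ) = 2 + 1 by rfl,
      mov_move h2, show (2:ℕ) = 1 + 1 by rfl, mov_move h1,
      show (1:ℕ) = 0 + 1 by rfl, mov_move h0, m0]
  exact le_trans (by omega) (mov_le_len hg 4)

lemma int0 : ∀ y : Fin 7, (GG.Adj 4 y ∨ (4:Fin 7) = y) →
    (GG.Adj y 1 ∨ y = 1) → y = 2 := by decide
lemma int1 : ∀ y : Fin 7, (GG.Adj 2 y ∨ (2:Fin 7) = y) →
    (GG.Adj y 1 ∨ y = 1) → y = 1 ∨ y = 2 ∨ y = 6 := by decide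
lemma int2 : ∀ y : Fin 7, (GG.Adj 0 y ∨ (0:Fin 7) = y) →
    (GG.Adj y 2 ∨ y = 2) → y = 1 := by decide
lemma int3 : ∀ y : Fin 7, (GG.Adj 1 y ∨ (1:Fin 7) = y) →
    (GG.Adj y 2 ∨ y = 2) → y = 1 ∨ y = 2 ∨ y = 6 := by decide

lemma no_pareto {q : Fin 2 → ℕ → Fin 7} (hq : IsSolution GG xI0 xG0 q)
    (ht : totalTime xG0 q = 7) (hm : maxDist q = 3) : False := by
  obtain ⟨hfA, hfB⟩ := feasQ hq
  rw [totalTime_eq] at ht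
  have hA3 := arrA_ge hfA
  have hB3 := arrB_ge hfB
  have hlenA : pathLen (q 0) ≤ 3 := by
    have h := Finset.le_sup (f := fun i => pathLen (q i)) (Finset.mem_univ 0)
    rw [show (Finset.univ.sup fun i => pathLen (q i)) = maxDist q from rfl, hm] at h
    exact h
  have hlenB : pathLen (q 1) ≤ 3 := by
    have h := Finset.le_sup (f := fun i => pathLen (q i)) (Finset.mem_univ 1)
    rw [show (Finset.univ.sup fun i => pathLen (q i)) = maxDist q from rfl, hm] at h
    exact h
  have hpair := hq.2 (show (0 : Fin 2) ≠ 1 by decide)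
  rcases Nat.lt_or_ge (arrivalTime 3 (q 0)) 4 with hlt | hge
  · -- robot 0 arrives at time 3, robot 1 at time 4
    have hA : arrivalTime 3 (q 0) = 3 := by omega
    have hB : arrivalTime 5 (q 1) = 4 := by omega
    obtain ⟨ha1, ha2⟩ := forceA3 hfA hA
    obtain ⟨hb0, hbex, hbg, hbs⟩ := hfB
    have hb4 : q 1 4 = 5 := by have := arr_mem hbex; rwa [hB] at this
    have hb3 : q 1 3 = 1 := by
      rcases st_to5 _ (hb4 ▸ hbs 3) with h | h
      · exact h
      · exact absurd h (arr_lt (by omega))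
    rcases st_from4 _ (hb0 ▸ hbs 0) with h1 | h1
    · -- q 1 1 = 4 : forced q 1 2 = 2, meet with robot 0 at time 2
      have h2 : q 1 2 = 2 := int0 _ (h1 ▸ hbs 1) (hb3 ▸ hbs 2)
      exact hpair (Or.inl ⟨2, by rw [ha2, h2]⟩)
    · -- q 1 1 = 2
      rcases int1 _ (h1 ▸ hbs 1) (hb3 ▸ hbs 2) with h2 | h2 | h2
      · -- q 1 2 = 1 : head-on swap at time 1
        exact hpair (Or.inr ⟨1, by rw [ha1, h2], by rw [ha2, h1],
          by rw [ha1, ha2]; decide⟩)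
      · -- q 1 2 = 2 : meet at time 2
        exact hpair (Or.inl ⟨2, by rw [ha2, h2]⟩)
      · -- q 1 2 = 6 : robot 1 travels distance ≥ 4
        have := four_moves hbg (by rw [hb0, h1]; decide) (by rw [h1, h2]; decide)
          (by rw [h2, hb3]; decide) (by rw [hb3, hb4]; decide)
        omega
  · -- robot 0 arrives at time 4, robot 1 at time 3
    have hA : arrivalTime 3 (q 0) = 4 := by omega
    have hB : arrivalTime 5 (q 1) = 3 := by omega
    obtain ⟨hb1, hb2⟩ := forceB3 hfB hB
    obtain ⟨ha0, haex, hag, has⟩ := hfA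
    have ha4 : q 0 4 = 3 := by have := arr_mem haex; rwa [hA] at this
    have ha3 : q 0 3 = 2 := by
      rcases st_to3 _ (ha4 ▸ has 3) with h | h
      · exact h
      · exact absurd h (arr_lt (by omega))
    rcases st_from0 _ (ha0 ▸ has 0) with h1 | h1
    · -- q 0 1 = 0 : forced q 0 2 = 1, meet with robot 1 at time 2
      have h2 : q 0 2 = 1 := int2 _ (h1 ▸ has 1) (ha3 ▸ has 2)
      exact hpair (Or.inl ⟨2, by rw [h2, hb2]⟩)
    · -- q 0 1 = 1
      rcases int3 _ (h1 ▸ has 1) (ha3 ▸ has 2) with h2 | h2 | h2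
      · -- q 0 2 = 1 : meet at time 2
        exact hpair (Or.inl ⟨2, by rw [h2, hb2]⟩)
      · -- q 0 2 = 2 : head-on swap at time 1
        exact hpair (Or.inr ⟨1, by rw [h1, hb2], by rw [h2, hb1],
          by rw [h1, h2]; decide⟩)
      · -- q 0 2 = 6 : robot 0 travels distance ≥ 4
        have := four_moves hag (by rw [ha0, h1]; decide) (by rw [h1, h2]; decide)
          (by rw [h2, ha3]; decide) (by rw [ha3, ha4]; decide)
        omega

lemma xI0_inj : Function.Injective xI0 := by
  intro a b h
  fin_cases a <;> fin_cases b <;> simp_all [xI0] <;> exact absurd h (by decide)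

lemma xG0_inj : Function.Injective xG0 := by
  intro a b h
  fin_cases a <;> fin_cases b <;> simp_all [xG0] <;> exact absurd h (by decide)

/-- There exists a solvable MPP instance such that no solution simultaneously
attains the minimum total arrival time and the minimum maximum distance. -/
theorem pareto_totalTime_maxDist :
    ∃ (k : ℕ) (V : Type) (G : SimpleGraph V) (xI xG : Fin k → V),
      IsMPPInstance G xI xG ∧ (∃ p, IsSolution G xI xG p) ∧
      ¬ ∃ p, IsSolution G xI xG p ∧ totalTime xG p = minTotalTime G xI xG ∧
        maxDist p = minMaxDist G xI xG := by
  refine ⟨2, Fin 7, GG, xI0, xG0, ⟨GG_conn, xI0_inj, xG0_inj⟩,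
    ⟨sol1, sol1_isSol⟩, ?_⟩
  rintro ⟨p, hp, htot, hmax⟩
  rw [minTotal_eq] at htot
  rw [minMax_eq] at hmax
  exact no_pareto hp htot hmax

end MPPFormal
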